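/- Let f be a non-negative monotone function on a finite set V with partition matroid constraints given by a partition B_1,…,B_k of V and integer thresholds d_1,…,d_k (1 ≤ d_i ≤ |B_i|), let d = Σ_i d_i, d̄ = min_i d_i, and let OPT be a feasible set maximizing f. Let γ be a real number with 0 ≤ γ ≤ 1 such that Σ_{v∈L} ( f(X∪{v}) − f(X) ) ≥ γ · ( f(X∪L) − f(X) ) for every X ⊆ V with |X| < d̄ + 1 and every nonempty L ⊆ V∖X with |L| ≤ d. Then there exists a feasible set Z ⊆ V with |Z| ≤ d̄ such that f(Z) ≥ (1 − e^{−γ·d̄/d}) · f(OPT). -/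
import Mathlib


/-- Existence of a feasible set `Z` with `|Z| ≤ d̄` and
`f(Z) ≥ (1 − e^{−γ·d̄/d})·f(OPT)` for a non-negative monotone `f` under partition matroid
constraints, where `γ ∈ [0,1]` lower-bounds the submodularity ratio. -/
theorem stmt_6 {α : Type*} [DecidableEq α] (V : Finset α) (f : Finset α → ℝ)
    (hf0 : ∀ X ⊆ V, 0 ≤ f X)
    (hmono : ∀ S T : Finset α, S ⊆ T → T ⊆ V → f S ≤ f T)
    (k : ℕ) (hk : 0 < k) (B : Fin k → Finset α)
    (hdisj : ∀ i j : Fin k, i ≠ j → Disjoint (B i) (B j))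
    (hcover : Finset.univ.biUnion B = V)
    (dPart : Fin k → ℕ) (hdPart : ∀ i, 1 ≤ dPart i ∧ dPart i ≤ (B i).card)
    (d : ℕ) (hd : d = ∑ i, dPart i)
    (dbar : ℕ) (hdbar : IsLeast (Set.range dPart) dbar)
    (γ : ℝ) (hγ0 : 0 ≤ γ) (hγ1 : γ ≤ 1)
    (hγ : ∀ X ⊆ V, X.card < dbar + 1 → ∀ L ⊆ V \ X, L.Nonempty → L.card ≤ d →
      ∑ v ∈ L, (f (insert v X) - f X) ≥ γ * (f (X ∪ L) - f X))
    (OPT : Finset α) (hOPTsub : OPT ⊆ V) (hOPTfeas : ∀ i, (OPT ∩ B i).card ≤ dPart i)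
    (hOPTmax : ∀ Y ⊆ V, (∀ i, (Y ∩ B i).card ≤ dPart i) → f Y ≤ f OPT) :
    ∃ Z : Finset α, Z ⊆ V ∧ (∀ i, (Z ∩ B i).card ≤ dPart i) ∧ Z.card ≤ dbar ∧
      f Z ≥ (1 - Real.exp (-(γ * (dbar : ℝ) / (d : ℝ)))) * f OPT := by
  obtain ⟨⟨i0, hi0⟩, hlb⟩ := hdbar
  have hd1 : 1 ≤ d := by
    rw [hd]
    calc 1 ≤ dPart i0 := (hdPart i0).1
    _ ≤ ∑ i, dPart i := Finset.single_le_sum (fun i _ => Nat.zero_le _) (Finset.mem_univ i0)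
  have hdR : (1:ℝ) ≤ (d:ℝ) := by exact_mod_cast hd1
  have hdpos : (0:ℝ) < d := lt_of_lt_of_le one_pos hdR
  have hOPTeq : OPT = Finset.univ.biUnion (fun i => OPT ∩ B i) := by
    ext x
    simp only [Finset.mem_biUnion, Finset.mem_univ, Finset.mem_inter, true_and]
    constructor
    · intro hx
      have hxV : x ∈ V := hOPTsub hx
      rw [← hcover] at hxV
      simp only [Finset.mem_biUnion, Finset.mem_univ, true_and] at hxV
      obtain ⟨i, hi⟩ := hxV
      exact ⟨i, hx, hi⟩
    · rintro ⟨i, hx, -⟩; exact hx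
  have hOPTcard : OPT.card ≤ d := by
    rw [hOPTeq, Finset.card_biUnion (fun i _ j _ hij =>
      Finset.disjoint_of_subset_left Finset.inter_subset_right
        (Finset.disjoint_of_subset_right Finset.inter_subset_right (hdisj i j hij))), hd]
    exact Finset.sum_le_sum (fun i _ => hOPTfeas i)
  have hfOPT : 0 ≤ f OPT := hf0 OPT hOPTsub
  have hbase : 0 ≤ 1 - γ / d := by
    have : γ / d ≤ 1 := by
      rw [div_le_one hdpos]; exact le_trans hγ1 hdR
    linarith
  -- key induction
  have key : ∀ t, t ≤ dbar → ∃ Z, Z ⊆ OPT ∧ Z.card ≤ t ∧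
      f OPT - f Z ≤ (1 - γ / d) ^ t * f OPT := by
    intro t
    induction t with
    | zero =>
      intro _
      refine ⟨∅, Finset.empty_subset _, le_refl _, ?_⟩
      have h0 : 0 ≤ f ∅ := hf0 ∅ (Finset.empty_subset _)
      simp only [pow_zero, one_mul]
      linarith
    | succ t ih =>
      intro ht
      obtain ⟨Z, hZO, hZc, hZf⟩ := ih (le_trans (Nat.le_succ t) ht)
      have hZV : Z ⊆ V := hZO.trans hOPTsub
      by_cases hgap : f OPT - f Z ≤ 0
      · refine ⟨Z, hZO, le_trans hZc (Nat.le_succ t), ?_⟩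
        have : 0 ≤ (1 - γ / d) ^ (t+1) * f OPT :=
          mul_nonneg (pow_nonneg hbase _) hfOPT
        linarith
      · push_neg at hgap
        set L := OPT \ Z with hL
        have hLne : L.Nonempty := by
          rw [Finset.sdiff_nonempty]
          intro hsub
          have := hmono OPT Z hsub hZV
          linarith
        have hLsub : L ⊆ V \ Z :=
          Finset.sdiff_subset_sdiff hOPTsub (le_refl _)
        have hLcard : L.card ≤ d :=
          le_trans (Finset.card_le_card (Finset.sdiff_subset)) hOPTcard
        have hZcard : Z.card < dbar + 1 := by
          have : Z.card ≤ t := hZc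
          omega
        have hsum := hγ Z hZV hZcard L hLsub hLne hLcard
        have hZL : Z ∪ L = Z ∪ OPT := by
          rw [hL, Finset.union_sdiff_self_eq_union]
        have hZLf : f OPT ≤ f (Z ∪ L) := by
          rw [hZL]
          exact hmono OPT (Z ∪ OPT) Finset.subset_union_right
            (Finset.union_subset hZV hOPTsub)
        have hsum2 : γ * (f OPT - f Z) ≤ ∑ v ∈ L, (f (insert v Z) - f Z) := by
          calc γ * (f OPT - f Z) ≤ γ * (f (Z ∪ L) - f Z) := by nlinarith
          _ ≤ _ := hsum
        -- pick best element
        have hLcpos : (0:ℝ) < L.card := by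
          exact_mod_cast Finset.card_pos.mpr hLne
        obtain ⟨v, hvL, hv⟩ := Finset.exists_le_of_sum_le hLne
          (show ∑ _v ∈ L, (γ * (f OPT - f Z) / L.card) ≤
               ∑ v ∈ L, (f (insert v Z) - f Z) by
            rw [Finset.sum_const, nsmul_eq_mul, mul_div_cancel₀ _ (ne_of_gt hLcpos)]
            exact hsum2)
        have hvbound : γ / d * (f OPT - f Z) ≤ f (insert v Z) - f Z := by
          have h1 : γ / d * (f OPT - f Z) ≤ γ / L.card * (f OPT - f Z) := by
            apply mul_le_mul_of_nonneg_right _ (le_of_lt hgap)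
            apply div_le_div_of_nonneg_left hγ0 hLcpos
            exact_mod_cast hLcard
          calc γ / d * (f OPT - f Z) ≤ γ / L.card * (f OPT - f Z) := h1
          _ = γ * (f OPT - f Z) / L.card := by ring
          _ ≤ _ := hv
        refine ⟨insert v Z, ?_, ?_, ?_⟩
        · exact Finset.insert_subset (Finset.mem_sdiff.mp hvL).1 hZO
        · exact le_trans (Finset.card_insert_le _ _) (Nat.succ_le_succ hZc)
        · have hstep : f OPT - f (insert v Z) ≤ (1 - γ / d) * (f OPT - f Z) := by
            nlinarith
          calc f OPT - f (insert v Z) ≤ (1 - γ / d) * (f OPT - f Z) := hstep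
          _ ≤ (1 - γ / d) * ((1 - γ / d) ^ t * f OPT) :=
            mul_le_mul_of_nonneg_left hZf hbase
          _ = (1 - γ / d) ^ (t+1) * f OPT := by ring
  obtain ⟨Z, hZO, hZc, hZf⟩ := key dbar (le_refl _)
  refine ⟨Z, hZO.trans hOPTsub, ?_, hZc, ?_⟩
  · intro i
    exact le_trans (Finset.card_le_card (Finset.inter_subset_inter_right hZO)) (hOPTfeas i)
  · have hexp : (1 - γ / d) ^ dbar ≤ Real.exp (-(γ * dbar / d)) := by
      have h1 : 1 - γ / d ≤ Real.exp (-(γ / d)) := by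
        have := Real.add_one_le_exp (-(γ / d))
        linarith
      calc (1 - γ / d) ^ dbar ≤ Real.exp (-(γ / d)) ^ dbar :=
        pow_le_pow_left₀ hbase h1 _
      _ = Real.exp (-(γ / d) * dbar) := by
        rw [← Real.exp_nat_mul]; ring_nf
      _ = Real.exp (-(γ * dbar / d)) := by ring_nf
    have : (1 - γ / d) ^ dbar * f OPT ≤ Real.exp (-(γ * dbar / d)) * f OPT :=
      mul_le_mul_of_nonneg_right hexp hfOPT
    have h2 : f OPT - f Z ≤ Real.exp (-(γ * dbar / d)) * f OPT := le_trans hZf this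
    linarith [mul_nonneg (Real.exp_nonneg (-(γ * dbar / d))) hfOPT]
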